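/- Let X_1,...,X_N be i.i.d. random variables with mean μ and finite variance σ². Then μ - (N-1)σ/√(2N-1) ≤ E[min_i X_i] ≤ μ, and E[min of N+1 copies] ≤ E[min of N copies]. -/

import Mathlib

open MeasureTheory ProbabilityTheory Set Filter
open scoped Topology ENNReal

noncomputable def qf (ν : Measure ℝ) (u : ℝ) : ℝ :=
  if u ∈ Set.Ioo (0:ℝ) 1 then sInf {y | u ≤ cdf ν y} else 0

variable {ν : Measure ℝ} [IsProbabilityMeasure ν]

lemma qf_le_iff {u : ℝ} (hu : u ∈ Set.Ioo (0:ℝ) 1) (x : ℝ) :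
    qf ν u ≤ x ↔ u ≤ cdf ν x := by
  have hne : {y | u ≤ cdf ν y}.Nonempty := by
    obtain ⟨y, hy⟩ := ((tendsto_cdf_atTop ν).eventually (Ioi_mem_nhds hu.2)).exists
    exact ⟨y, le_of_lt hy⟩
  have hbdd : BddBelow {y | u ≤ cdf ν y} := by
    obtain ⟨z, hz⟩ := ((tendsto_cdf_atBot ν).eventually (Iio_mem_nhds hu.1)).exists
    refine ⟨z, fun y hy => ?_⟩
    by_contra hzy
    exact absurd (le_trans hy (monotone_cdf ν (le_of_not_ge hzy))) (not_le.2 hz)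
  simp only [qf, if_pos hu]
  constructor
  · intro h
    have key : ∀ y, x < y → u ≤ cdf ν y := by
      intro y hy
      obtain ⟨z, hz, hzy⟩ := exists_lt_of_csInf_lt hne (lt_of_le_of_lt h hy)
      exact hz.trans (monotone_cdf ν hzy.le)
    have hcont : Tendsto (cdf ν) (𝓝[>] x) (𝓝 (cdf ν x)) :=
      ((cdf ν).right_continuous x).mono_left (nhdsWithin_mono x Ioi_subset_Ici_self)
    exact ge_of_tendsto hcont (eventually_nhdsWithin_of_forall fun y hy => key y hy)
  · intro h
    exact csInf_le hbdd h

lemma measurable_qf : Measurable (qf ν) := by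
  refine measurable_of_Iic fun x => ?_
  have : qf ν ⁻¹' Iic x =
      (Set.Ioo 0 1 ∩ Set.Iic (cdf ν x)) ∪ ((Set.Ioo 0 1)ᶜ ∩ {u : ℝ | (0:ℝ) ≤ x}) := by
    ext u
    by_cases hu : u ∈ Set.Ioo (0:ℝ) 1
    · simp [Set.mem_preimage, qf_le_iff hu, hu]
    · simp [Set.mem_preimage, qf, if_neg hu, hu]
  rw [this]
  exact ((measurableSet_Ioo.inter measurableSet_Iic).union
    ((measurableSet_Ioo.compl).inter (MeasurableSet.const _)))

lemma qf_preimage_inter {x : ℝ} :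
    qf ν ⁻¹' Iic x ∩ Set.Ioo 0 1 = Set.Ioc 0 (cdf ν x) ∩ Set.Ioo 0 1 := by
  ext u
  constructor
  · rintro ⟨h1, h2⟩
    exact ⟨⟨h2.1, (qf_le_iff h2 x).1 h1⟩, h2⟩
  · rintro ⟨h1, h2⟩
    exact ⟨(qf_le_iff h2 x).2 h1.2, h2⟩

lemma map_qf : (volume.restrict (Set.Ioo (0:ℝ) 1)).map (qf ν) = ν := by
  have hprob : IsProbabilityMeasure (volume.restrict (Set.Ioo (0:ℝ) 1)) := by
    constructor
    simp [Real.volume_Ioo]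
  have : IsProbabilityMeasure ((volume.restrict (Set.Ioo (0:ℝ) 1)).map (qf ν)) :=
    Measure.isProbabilityMeasure_map measurable_qf.aemeasurable
  refine Measure.ext_of_Iic _ _ fun x => ?_
  rw [Measure.map_apply measurable_qf measurableSet_Iic,
    Measure.restrict_apply (measurable_qf measurableSet_Iic), qf_preimage_inter]
  have hp0 : 0 ≤ cdf ν x := cdf_nonneg ν x
  have hp1 : cdf ν x ≤ 1 := cdf_le_one ν x
  rcases lt_or_eq_of_le hp1 with hp | hp
  · have : Set.Ioc 0 (cdf ν x) ∩ Set.Ioo 0 1 = Set.Ioc 0 (cdf ν x) := by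
      ext u
      constructor
      · rintro ⟨h1, _⟩; exact h1
      · intro h; exact ⟨h, h.1, lt_of_le_of_lt h.2 hp⟩
    rw [this, Real.volume_Ioc, sub_zero, ofReal_cdf]
  · have : Set.Ioc 0 (cdf ν x) ∩ Set.Ioo 0 1 = Set.Ioo 0 1 := by
      ext u
      constructor
      · rintro ⟨_, h2⟩; exact h2
      · intro h; exact ⟨⟨h.1, h.2.le.trans hp.symm.le⟩, h⟩
    rw [this, Real.volume_Ioo, sub_zero, ← ofReal_cdf ν x, hp]
noncomputable def wfn (N : ℕ) (u : ℝ) : ℝ := N * (1-u)^(N-1)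

lemma continuous_wfn (N : ℕ) : Continuous (wfn N) := by
  unfold wfn; fun_prop

lemma hasDerivAt_w (N : ℕ) (u : ℝ) :
    HasDerivAt (fun v : ℝ => -(1-v)^N) (wfn N u) u := by
  have h1 : HasDerivAt (fun v : ℝ => 1 - v) (-1) u := by
    simpa using (hasDerivAt_id u).const_sub 1
  have h2 := (h1.pow N).neg
  refine h2.congr_deriv ?_
  unfold wfn; ring

lemma int_w (N : ℕ) (a b : ℝ) :
    ∫ u in a..b, wfn N u = (1-a)^N - (1-b)^N := by
  rw [intervalIntegral.integral_eq_sub_of_hasDerivAt (fun u _ => hasDerivAt_w N u)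
    ((continuous_wfn N).intervalIntegrable a b)]
  ring

lemma int_w_Ioo {N : ℕ} {a b : ℝ} (hab : a ≤ b) :
    ∫ u in Set.Ioo a b, wfn N u = (1-a)^N - (1-b)^N := by
  rw [← MeasureTheory.integral_Ioc_eq_integral_Ioo, ← intervalIntegral.integral_of_le hab,
    int_w]

lemma wfn_nonneg {N : ℕ} {u : ℝ} (hu : u ≤ 1) : 0 ≤ wfn N u := by
  unfold wfn
  exact mul_nonneg (Nat.cast_nonneg N) (pow_nonneg (by linarith) _)

lemma lint_w_Ioc {N : ℕ} {a b : ℝ} (hab : a ≤ b) (hb : b ≤ 1) :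
    ∫⁻ u in Set.Ioc a b, ENNReal.ofReal (wfn N u) =
      ENNReal.ofReal ((1-a)^N - (1-b)^N) := by
  rw [← ofReal_integral_eq_lintegral_ofReal
      ((continuous_wfn N).integrableOn_Ioc)
      (((ae_restrict_iff' measurableSet_Ioc).2 (ae_of_all _ fun u hu =>
        wfn_nonneg (hu.2.trans hb))))]
  rw [← intervalIntegral.integral_of_le hab, int_w]

lemma lint_w_Ioo {N : ℕ} {a b : ℝ} (hab : a ≤ b) (hb : b ≤ 1) :
    ∫⁻ u in Set.Ioo a b, ENNReal.ofReal (wfn N u) =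
      ENNReal.ofReal ((1-a)^N - (1-b)^N) := by
  rw [Measure.restrict_congr_set Ioo_ae_eq_Ioc, lint_w_Ioc hab hb]

lemma int_w2 {N : ℕ} (hN : 1 ≤ N) :
    ∫ u in Set.Ioo (0:ℝ) 1, (wfn N u)^2 = (N:ℝ)^2/(2*N-1) := by
  have hc : ((2*N-1 : ℕ) : ℝ) = 2*(N:ℝ)-1 := by
    push_cast [Nat.cast_sub (by omega : 1 ≤ 2*N)]; ring
  have hpos : (0:ℝ) < 2*(N:ℝ)-1 := by
    have : (1:ℝ) ≤ (N:ℝ) := by exact_mod_cast hN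
    linarith
  have hder : ∀ u ∈ Set.uIcc (0:ℝ) 1, HasDerivAt
      (fun v : ℝ => -((N:ℝ)^2/(2*(N:ℝ)-1)) * (1-v)^(2*N-1))
      ((wfn N u)^2) u := by
    intro u _
    have h1 : HasDerivAt (fun v : ℝ => 1 - v) (-1) u := by
      simpa using (hasDerivAt_id u).const_sub 1
    have h2 := (h1.pow (2*N-1)).const_mul (-((N:ℝ)^2/(2*(N:ℝ)-1)))
    refine h2.congr_deriv ?_
    have he : 2*N-1-1 = 2*N-2 := by omega
    have he2 : (N-1)*2 = 2*N-2 := by omega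
    rw [he, hc]
    unfold wfn
    rw [mul_pow, ← pow_mul, he2]
    field_simp
    exact mul_div_cancel_left₀ _ (by linarith)
  have hcont : Continuous fun u : ℝ => (wfn N u)^2 := by
    unfold wfn; fun_prop
  rw [← MeasureTheory.integral_Ioc_eq_integral_Ioo,
    ← intervalIntegral.integral_of_le (by norm_num : (0:ℝ) ≤ 1),
    intervalIntegral.integral_eq_sub_of_hasDerivAt hder (hcont.intervalIntegrable 0 1)]
  have h01 : (0:ℝ)^(2*N-1) = 0 := zero_pow (by omega)
  simp only [sub_self, sub_zero, h01]
  ring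

lemma map_qf_w {N : ℕ} (hN : 1 ≤ N) (x : ℝ) :
    ((volume.restrict (Set.Ioo (0:ℝ) 1)).withDensity
      (fun u => ENNReal.ofReal (wfn N u))).map (qf ν) (Set.Iic x) =
      ENNReal.ofReal (1 - (1 - cdf ν x)^N) := by
  rw [Measure.map_apply measurable_qf measurableSet_Iic,
    withDensity_apply _ (measurable_qf measurableSet_Iic),
    Measure.restrict_restrict (measurable_qf measurableSet_Iic),
    qf_preimage_inter]
  have hp0 : 0 ≤ cdf ν x := cdf_nonneg ν x
  have hp1 : cdf ν x ≤ 1 := cdf_le_one ν x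
  rcases lt_or_eq_of_le hp1 with hp | hp
  · have hset : Set.Ioc 0 (cdf ν x) ∩ Set.Ioo 0 1 = Set.Ioc 0 (cdf ν x) := by
      ext u
      constructor
      · rintro ⟨h1, _⟩; exact h1
      · intro h; exact ⟨h, h.1, lt_of_le_of_lt h.2 hp⟩
    rw [hset, lint_w_Ioc hp0 hp1]
    norm_num
  · have hset : Set.Ioc 0 (cdf ν x) ∩ Set.Ioo 0 1 = Set.Ioo 0 1 := by
      ext u
      constructor
      · rintro ⟨_, h2⟩; exact h2
      · intro h; exact ⟨⟨h.1, h.2.le.trans hp.symm.le⟩, h⟩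
    rw [hset, lint_w_Ioo (by norm_num) (le_refl 1), hp]
    norm_num [zero_pow (by omega : N ≠ 0)]

lemma isProbabilityMeasure_rhoN {N : ℕ} (hN : 1 ≤ N) :
    IsProbabilityMeasure ((volume.restrict (Set.Ioo (0:ℝ) 1)).withDensity
      (fun u => ENNReal.ofReal (wfn N u))) := by
  constructor
  rw [withDensity_apply _ MeasurableSet.univ, Measure.restrict_restrict MeasurableSet.univ,
    Set.univ_inter, lint_w_Ioo (by norm_num) (le_refl 1)]
  norm_num [zero_pow (by omega : N ≠ 0)]

lemma integrable_mul_of_memL2 {α : Type*} [MeasurableSpace α] {μ : Measure α} {f g : α → ℝ}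
    (hf : MemLp f 2 μ) (hg : MemLp g 2 μ) : Integrable (fun x => f x * g x) μ := by
  refine (hf.integrable_sq.add hg.integrable_sq).mono' (hf.1.mul hg.1) (ae_of_all _ fun x => ?_)
  rw [Real.norm_eq_abs, abs_mul]
  have : ((fun x => f x ^ 2) + fun x => g x ^ 2) x = f x ^ 2 + g x ^ 2 := rfl
  rw [this]
  nlinarith [sq_nonneg (|f x| - |g x|), abs_nonneg (f x), abs_nonneg (g x),
    sq_abs (f x), sq_abs (g x)]

lemma measurable_iInf_fin {Ω : Type*} [MeasurableSpace Ω] {k : ℕ} [Nonempty (Fin k)]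
    {Y : Fin k → Ω → ℝ} (h : ∀ i, Measurable (Y i)) :
    Measurable fun ω => ⨅ i, Y i ω := by
  have heq : (fun ω => ⨅ i, Y i ω) =
      fun ω => Finset.univ.inf' Finset.univ_nonempty (fun i => Y i ω) := by
    funext ω; rw [Finset.inf'_univ_eq_ciInf]
  rw [heq]
  refine measurable_of_Iio fun x => ?_
  have : (fun ω => Finset.univ.inf' Finset.univ_nonempty (fun i => Y i ω)) ⁻¹' Set.Iio x =
      ⋃ i : Fin k, Y i ⁻¹' Set.Iio x := by
    ext ω
    simp [Finset.inf'_lt_iff]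
  rw [this]
  exact MeasurableSet.iUnion fun i => h i measurableSet_Iio

theorem min_expectation_bounds {Ω : Type*} [MeasureSpace Ω]
    [IsProbabilityMeasure (ℙ : Measure Ω)]
    (N : ℕ) (hN : 1 ≤ N) (μ σ : ℝ) (hσ : 0 ≤ σ)
    (X : Fin (N + 1) → Ω → ℝ) (hmeas : ∀ i, Measurable (X i))
    (hindep : iIndepFun X ℙ)
    (hident : ∀ i j, Measure.map (X i) ℙ = Measure.map (X j) ℙ)
    (hL2 : ∀ i, MemLp (X i) 2 ℙ)
    (hmean : ∀ i, ∫ ω, X i ω ∂ℙ = μ)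
    (hvar : ∀ i, variance (X i) ℙ = σ ^ 2) :
    (μ - (N - 1) * σ / Real.sqrt (2 * N - 1) ≤
        ∫ ω, (⨅ i : Fin N, X i.castSucc ω) ∂ℙ) ∧
    (∫ ω, (⨅ i : Fin N, X i.castSucc ω) ∂ℙ ≤ μ) ∧
    (∫ ω, (⨅ i : Fin (N + 1), X i ω) ∂ℙ ≤
        ∫ ω, (⨅ i : Fin N, X i.castSucc ω) ∂ℙ) := by
  classical
  haveI hne : Nonempty (Fin N) := ⟨⟨0, hN⟩⟩
  set ν : Measure ℝ := Measure.map (X 0) ℙ with hν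
  haveI : IsProbabilityMeasure ν := Measure.isProbabilityMeasure_map (hmeas 0).aemeasurable
  set minN : Ω → ℝ := fun ω => ⨅ i : Fin N, X i.castSucc ω with hminN
  set minN1 : Ω → ℝ := fun ω => ⨅ i : Fin (N+1), X i ω with hminN1
  have hmmin : Measurable minN := measurable_iInf_fin (fun i => hmeas i.castSucc)
  have hmmin1 : Measurable minN1 := measurable_iInf_fin hmeas
  -- integrability of the minima
  have hsum_int : Integrable (fun ω => ∑ i : Fin (N+1), |X i ω|) ℙ := by
    refine integrable_finset_sum _ (fun i _ => ((hL2 i).integrable one_le_two).abs)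
  have hint_minN : Integrable minN ℙ := by
    refine hsum_int.mono' hmmin.aestronglyMeasurable (ae_of_all _ fun ω => ?_)
    obtain ⟨j, _, hj⟩ := Finset.exists_mem_eq_inf' (Finset.univ_nonempty) 
      (fun i : Fin N => X i.castSucc ω)
    have : minN ω = X j.castSucc ω := by
      show (⨅ i : Fin N, X i.castSucc ω) = X j.castSucc ω
      rw [← Finset.inf'_univ_eq_ciInf]; exact hj
    rw [Real.norm_eq_abs, this]
    exact Finset.single_le_sum (fun i _ => abs_nonneg (X i ω)) (Finset.mem_univ j.castSucc)
  have hint_minN1 : Integrable minN1 ℙ := by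
    refine hsum_int.mono' hmmin1.aestronglyMeasurable (ae_of_all _ fun ω => ?_)
    obtain ⟨j, _, hj⟩ := Finset.exists_mem_eq_inf' (Finset.univ_nonempty)
      (fun i : Fin (N+1) => X i ω)
    have : minN1 ω = X j ω := by
      show (⨅ i : Fin (N+1), X i ω) = X j ω
      rw [← Finset.inf'_univ_eq_ciInf]; exact hj
    rw [Real.norm_eq_abs, this]
    exact Finset.single_le_sum (fun i _ => abs_nonneg (X i ω)) (Finset.mem_univ j)
  -- part 2
  have part2 : ∫ ω, minN ω ∂ℙ ≤ μ := by
    have hle : ∀ ω, minN ω ≤ X (⟨0, hN⟩ : Fin N).castSucc ω := fun ω =>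
      ciInf_le (Set.Finite.bddBelow (Set.finite_range _)) _
    calc ∫ ω, minN ω ∂ℙ ≤ ∫ ω, X (⟨0, hN⟩ : Fin N).castSucc ω ∂ℙ :=
          integral_mono hint_minN ((hL2 _).integrable one_le_two) hle
      _ = μ := hmean _
  -- part 3
  have part3 : ∫ ω, minN1 ω ∂ℙ ≤ ∫ ω, minN ω ∂ℙ := by
    refine integral_mono hint_minN1 hint_minN fun ω => ?_
    exact le_ciInf fun i => ciInf_le (Set.Finite.bddBelow (Set.finite_range _)) i.castSucc
  refine ⟨?_, part2, part3⟩
  -- part 1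
  -- survival function of the minimum
  have hsurv : ∀ x : ℝ, ℙ (minN ⁻¹' Set.Ioi x) = (ν (Set.Ioi x))^N := by
    intro x
    have hi : minN ⁻¹' Set.Ioi x = ⋂ i : Fin N, X i.castSucc ⁻¹' Set.Ioi x := by
      ext ω
      simp only [Set.mem_preimage, Set.mem_Ioi, Set.mem_iInter]
      show x < (⨅ i : Fin N, X i.castSucc ω) ↔ _
      rw [← Finset.inf'_univ_eq_ciInf, Finset.lt_inf'_iff]
      simp
    set S : Finset (Fin (N+1)) := Finset.univ.image Fin.castSucc with hS
    have hi2 : ⋂ i : Fin N, X i.castSucc ⁻¹' Set.Ioi x = ⋂ j ∈ S, X j ⁻¹' Set.Ioi x := by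
      ext ω
      simp only [Set.mem_iInter, Set.mem_preimage, Set.mem_Ioi, hS, Finset.mem_image,
        Finset.mem_univ, true_and]
      constructor
      · rintro h j ⟨i, rfl⟩; exact h i
      · intro h i; exact h _ ⟨i, rfl⟩
    have hprod := hindep.meas_biInter (S := S)
      (s := fun j => X j ⁻¹' Set.Ioi x)
      (fun j _ => ⟨Set.Ioi x, measurableSet_Ioi, rfl⟩)
    have hc : ∀ j, ℙ (X j ⁻¹' Set.Ioi x) = ν (Set.Ioi x) := by
      intro j
      rw [hν, hident 0 j, Measure.map_apply (hmeas j) measurableSet_Ioi]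
    rw [hi, hi2, hprod, Finset.prod_congr rfl (fun j _ => hc j), Finset.prod_const]
    congr 1
    rw [hS, Finset.card_image_of_injective _ (Fin.castSucc_injective N), Finset.card_univ,
      Fintype.card_fin]
  -- law of the minimum equals pushforward of weighted quantile measure
  set ρ : Measure ℝ := volume.restrict (Set.Ioo (0:ℝ) 1) with hρ
  haveI : IsProbabilityMeasure ρ := by
    constructor; rw [hρ]; simp [Real.volume_Ioo]
  set ρN : Measure ℝ := ρ.withDensity (fun u => ENNReal.ofReal (wfn N u)) with hρN
  haveI : IsProbabilityMeasure ρN := isProbabilityMeasure_rhoN hN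
  have hlawmin : Measure.map minN ℙ = Measure.map (qf ν) ρN := by
    haveI : IsProbabilityMeasure (Measure.map minN ℙ) :=
      Measure.isProbabilityMeasure_map hmmin.aemeasurable
    haveI : IsProbabilityMeasure (Measure.map (qf ν) ρN) :=
      Measure.isProbabilityMeasure_map measurable_qf.aemeasurable
    refine Measure.ext_of_Iic _ _ fun x => ?_
    rw [show Measure.map (qf ν) ρN (Set.Iic x) = ENNReal.ofReal (1 - (1 - cdf ν x)^N) from
      map_qf_w hN x]
    rw [Measure.map_apply hmmin measurableSet_Iic]
    have hcompl : minN ⁻¹' Set.Iic x = (minN ⁻¹' Set.Ioi x)ᶜ := by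
      ext ω; simp [not_lt]
    rw [hcompl, measure_compl (hmmin measurableSet_Ioi) (measure_ne_top _ _), measure_univ,
      hsurv x]
    have hIoi : ν (Set.Ioi x) = ENNReal.ofReal (1 - cdf ν x) := by
      have h2 : ν (Set.Ioi x) = 1 - ν (Set.Iic x) := by
        rw [← measure_univ (μ := ν), ← Set.compl_Iic]
        exact measure_compl measurableSet_Iic (measure_ne_top _ _)
      rw [h2, ← ofReal_cdf ν x, ENNReal.ofReal_sub _ (cdf_nonneg ν x), ENNReal.ofReal_one]
    have hq0 : (0:ℝ) ≤ 1 - cdf ν x := by linarith [cdf_le_one ν x]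
    rw [hIoi, ← ENNReal.ofReal_pow hq0,
      ENNReal.ofReal_sub _ (pow_nonneg hq0 N), ENNReal.ofReal_one]
  -- transfer of moments to the quantile function
  have hmapQ : ρ.map (qf ν) = ν := map_qf
  have hQmem : MemLp (qf ν) 2 ρ := by
    have h0 : MemLp (fun x : ℝ => x) 2 ν := by
      rw [hν]
      exact (memLp_map_measure_iff aestronglyMeasurable_id (hmeas 0).aemeasurable).2 (hL2 0)
    have h1 : MemLp (fun x : ℝ => x) 2 (ρ.map (qf ν)) := by rw [hmapQ]; exact h0
    exact (memLp_map_measure_iff aestronglyMeasurable_id measurable_qf.aemeasurable).1 h1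
  have hwmem : MemLp (wfn N) 2 ρ := by
    refine MemLp.of_bound (continuous_wfn N).aestronglyMeasurable (N:ℝ) ?_
    rw [hρ]
    refine (ae_restrict_iff' measurableSet_Ioo).2 (ae_of_all _ fun u hu => ?_)
    rw [Real.norm_eq_abs, abs_of_nonneg (wfn_nonneg hu.2.le)]
    have h1 : (1 - u)^(N-1) ≤ 1 := pow_le_one₀ (by linarith [hu.2]) (by linarith [hu.1])
    calc wfn N u = N * (1-u)^(N-1) := rfl
      _ ≤ (N:ℝ) * 1 := mul_le_mul_of_nonneg_left h1 (Nat.cast_nonneg N)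
      _ = (N:ℝ) := mul_one _
  have hEQ : ∫ u, qf ν u ∂ρ = μ := by
    have h1 : ∫ x, x ∂(ρ.map (qf ν)) = ∫ u, qf ν u ∂ρ :=
      integral_map measurable_qf.aemeasurable aestronglyMeasurable_id
    have h2 : ∫ x : ℝ, x ∂(Measure.map (X 0) ℙ) = ∫ ω, X 0 ω ∂ℙ :=
      integral_map (hmeas 0).aemeasurable aestronglyMeasurable_id
    rw [← h1, hmapQ, hν, h2]
    exact hmean 0
  have hVarQ : ∫ u, (qf ν u - μ)^2 ∂ρ = σ^2 := by
    have hfm : ∀ (τ : Measure ℝ), AEStronglyMeasurable (fun x : ℝ => (x - μ)^2) τ :=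
      fun τ => (by fun_prop : Continuous fun x : ℝ => (x - μ)^2).aestronglyMeasurable
    have h1 : ∫ x, (x - μ)^2 ∂(ρ.map (qf ν)) = ∫ u, (qf ν u - μ)^2 ∂ρ :=
      integral_map measurable_qf.aemeasurable (hfm _)
    have h2 : ∫ x, (x - μ)^2 ∂ν = ∫ ω, (X 0 ω - μ)^2 ∂ℙ := by
      rw [hν]; exact integral_map (hmeas 0).aemeasurable (hfm _)
    have h3 : variance (X 0) ℙ = ∫ ω, (X 0 ω - μ)^2 ∂ℙ := by
      rw [variance_eq_integral (hL2 0).aemeasurable, hmean 0]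
    rw [← h1, hmapQ, h2, ← h3]
    exact hvar 0
  have hEmin : ∫ ω, minN ω ∂ℙ = ∫ u, qf ν u * wfn N u ∂ρ := by
    have hwm : Measurable fun u : ℝ => (wfn N u).toNNReal :=
      measurable_real_toNNReal.comp (continuous_wfn N).measurable
    calc ∫ ω, minN ω ∂ℙ
        = ∫ x, x ∂(Measure.map minN ℙ) :=
          (integral_map hmmin.aemeasurable aestronglyMeasurable_id).symm
      _ = ∫ x, x ∂(Measure.map (qf ν) ρN) := by rw [hlawmin]
      _ = ∫ u, qf ν u ∂ρN := integral_map measurable_qf.aemeasurable aestronglyMeasurable_id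
      _ = ∫ u, (wfn N u).toNNReal • qf ν u ∂ρ := by
          rw [hρN]
          exact integral_withDensity_eq_integral_smul hwm (qf ν)
      _ = ∫ u, qf ν u * wfn N u ∂ρ := by
          rw [hρ]
          refine integral_congr_ae ((ae_restrict_iff' measurableSet_Ioo).2
            (ae_of_all _ fun u hu => ?_))
          show (wfn N u).toNNReal • qf ν u = qf ν u * wfn N u
          rw [NNReal.smul_def, Real.coe_toNNReal _ (wfn_nonneg hu.2.le), smul_eq_mul]
          ring
  have hintw : ∫ u, wfn N u ∂ρ = 1 := by
    rw [hρ, int_w_Ioo (by norm_num : (0:ℝ) ≤ 1)]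
    norm_num [zero_pow (by omega : N ≠ 0)]
  have hintw2 : ∫ u, (wfn N u)^2 ∂ρ = (N:ℝ)^2/(2*N-1) := by
    rw [hρ]; exact int_w2 hN
  have hQi : Integrable (qf ν) ρ := hQmem.integrable one_le_two
  have hQwi : Integrable (fun u => qf ν u * wfn N u) ρ := integrable_mul_of_memL2 hQmem hwmem
  have hwi : Integrable (wfn N) ρ := hwmem.integrable one_le_two
  have hw2i : Integrable (fun u => (wfn N u)^2) ρ := hwmem.integrable_sq
  have hE : Integrable (fun u => μ * wfn N u) ρ := hwi.const_mul μ
  have hA : Integrable (fun u => qf ν u - qf ν u * wfn N u) ρ := hQi.sub hQwi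
  have hB : Integrable (fun u => μ - μ * wfn N u) ρ := (integrable_const μ).sub hE
  have hinner : ∫ u, (qf ν u - μ) * (1 - wfn N u) ∂ρ = μ - ∫ ω, minN ω ∂ℙ := by
    have hstep : ∫ u, (qf ν u - μ) * (1 - wfn N u) ∂ρ =
        ∫ u, ((qf ν u - qf ν u * wfn N u) - (μ - μ * wfn N u)) ∂ρ :=
      integral_congr_ae (ae_of_all _ fun u => by ring)
    rw [hstep, integral_sub hA hB, integral_sub hQi hQwi,
      integral_sub (integrable_const μ) hE,
      hEQ, integral_const, integral_const_mul, hintw, ← hEmin]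
    simp [measure_univ]
  -- Cauchy-Schwarz
  have hden : (2*(N:ℝ)-1) ≠ 0 := by
    have : (1:ℝ) ≤ (N:ℝ) := by exact_mod_cast hN
    linarith
  have hN1 : (0:ℝ) ≤ (N:ℝ) - 1 := by
    have : (1:ℝ) ≤ (N:ℝ) := by exact_mod_cast hN
    linarith
  have habs2 : ∀ a : ℝ, |a|^(2:ℝ) = a^2 := fun a => by
    rw [show (2:ℝ) = ((2:ℕ):ℝ) by norm_num, Real.rpow_natCast, sq_abs]
  have hCS : ∫ u, (qf ν u - μ) * (1 - wfn N u) ∂ρ ≤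
      σ * (((N:ℝ) - 1)/Real.sqrt (2*N-1)) := by
    have hfmem : MemLp (fun u => |qf ν u - μ|) 2 ρ := (hQmem.sub (memLp_const μ)).abs
    have hgmem : MemLp (fun u => |1 - wfn N u|) 2 ρ := ((memLp_const 1).sub hwmem).abs
    have h2e : ENNReal.ofReal (2:ℝ) = 2 := by norm_num
    have hpq : Real.HolderConjugate 2 2 := Real.HolderConjugate.two_two
    have hH := integral_mul_le_Lp_mul_Lq_of_nonneg (μ := ρ) hpq
      (ae_of_all _ fun u => abs_nonneg (qf ν u - μ))
      (ae_of_all _ fun u => abs_nonneg (1 - wfn N u))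
      (h2e ▸ hfmem) (h2e ▸ hgmem)
    have e1 : ∫ u, |qf ν u - μ|^(2:ℝ) ∂ρ = σ^2 := by
      simp_rw [habs2]; exact hVarQ
    have e2 : ∫ u, |1 - wfn N u|^(2:ℝ) ∂ρ = ((N:ℝ)-1)^2/(2*N-1) := by
      simp_rw [habs2]
      have hexp2 : ∀ u, (1 - wfn N u)^2 = 1 - 2 * wfn N u + (wfn N u)^2 := fun u => by ring
      have hD : Integrable (fun u => 2 * wfn N u) ρ := hwi.const_mul 2
      have hC : Integrable (fun u => 1 - 2 * wfn N u) ρ := (integrable_const 1).sub hD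
      simp_rw [hexp2]
      rw [integral_add hC hw2i, integral_sub (integrable_const 1) hD,
        integral_const, integral_const_mul, hintw, hintw2]
      simp only [measure_univ, probReal_univ, ENNReal.toReal_one, smul_eq_mul, one_mul, mul_one]
      field_simp
      ring
    have step1 : ∫ u, (qf ν u - μ) * (1 - wfn N u) ∂ρ ≤
        ∫ u, |qf ν u - μ| * |1 - wfn N u| ∂ρ := by
      refine integral_mono
        (integrable_mul_of_memL2 (hQmem.sub (memLp_const μ)) ((memLp_const 1).sub hwmem))
        (integrable_mul_of_memL2 hfmem hgmem) fun u => ?_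
      rw [← abs_mul]
      exact le_abs_self _
    refine step1.trans (hH.trans ?_)
    rw [e1, e2, ← Real.sqrt_eq_rpow, ← Real.sqrt_eq_rpow, Real.sqrt_sq hσ,
      Real.sqrt_div (sq_nonneg _), Real.sqrt_sq hN1]
  have heq : ((N:ℝ) - 1) * σ / Real.sqrt (2 * (N:ℝ) - 1) =
      σ * (((N:ℝ) - 1)/Real.sqrt (2*(N:ℝ)-1)) := by ring
  rw [heq]
  linarith [hinner ▸ hCS]
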